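/- Let p = 2n be an even positive integer and let X = ℓ_p be the real Banach space of p-summable sequences with its usual norm. Then X admits a C^∞ bump function at 0: there exists a C^∞ function δ : ℓ_p → ℝ equal to 1 on a neighborhood of 0 and vanishing outside a bounded set; one may take δ(x) = τ(‖x‖^p) = τ(Σ_k x_k^{2n}) where τ : ℝ → ℝ is a C^∞ bump function on the real line. -/

import Mathlib

open Filter

open Finset in
set_option maxHeartbeats 1000000

noncomputable section LpBumpAux

variable (m : ℕ)

local notation "Xm" => lp (fun _ : ℕ => ℝ) ((m : ℕ) : ENNReal)

lemma lpbump_toReal : ((m : ℕ) : ENNReal).toReal = (m : ℝ) := by simp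

lemma lpbump_prod_le_sum_pow (hm : 0 < m) (a : Fin m → ℝ) (ha : ∀ i, 0 ≤ a i) :
    ∏ i, a i ≤ ∑ i, a i ^ m := by
  haveI : Nonempty (Fin m) := ⟨⟨0, hm⟩⟩
  have hne : (Finset.univ : Finset (Fin m)).Nonempty := Finset.univ_nonempty
  obtain ⟨i0, -, hi0⟩ := Finset.exists_max_image Finset.univ a hne
  calc ∏ i, a i ≤ ∏ _i : Fin m, a i0 :=
        Finset.prod_le_prod (fun i _ => ha i) (fun i _ => hi0 i (Finset.mem_univ i))
    _ = a i0 ^ m := by simp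
    _ ≤ ∑ i, a i ^ m :=
        Finset.single_le_sum (fun i _ => pow_nonneg (ha i) m) (Finset.mem_univ i0)

variable [Fact (1 ≤ ((m : ℕ) : ENNReal))]

lemma lpbump_summable_abs_pow (hm : 0 < m) (x : Xm) :
    Summable fun k => |x k| ^ m := by
  have h := (lp.memℓp x).summable (by rw [lpbump_toReal]; exact_mod_cast hm)
  simpa [lpbump_toReal, Real.rpow_natCast, Real.norm_eq_abs] using h

lemma lpbump_tsum_abs_pow (hm : 0 < m) (x : Xm) :
    ∑' k, |x k| ^ m = ‖x‖ ^ m := by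
  have h := lp.norm_rpow_eq_tsum (p := ((m : ℕ) : ENNReal))
    (by rw [lpbump_toReal]; exact_mod_cast hm) x
  rw [lpbump_toReal] at h
  simpa [Real.rpow_natCast, Real.norm_eq_abs] using h.symm

lemma lpbump_summable_prod (hm : 0 < m) (x : Fin m → Xm) :
    Summable fun k => ∏ i, x i k := by
  have hsum : Summable fun k => ∑ i, |x i k| ^ m :=
    summable_sum fun i _ => lpbump_summable_abs_pow m hm (x i)
  refine Summable.of_abs (hsum.of_nonneg_of_le (fun k => abs_nonneg _) fun k => ?_)
  rw [Finset.abs_prod]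
  exact lpbump_prod_le_sum_pow m hm (fun i => |x i k|) (fun i => abs_nonneg _)

/-- Evaluation at `k` as a linear map. -/
def lpbump_eval (k : ℕ) : Xm →ₗ[ℝ] ℝ where
  toFun x := x k
  map_add' x y := by simp [lp.coeFn_add]
  map_smul' c x := by simp [lp.coeFn_smul]

/-- Pointwise product multilinear map. -/
def lpbump_P (k : ℕ) : MultilinearMap ℝ (fun _ : Fin m => Xm) ℝ :=
  (MultilinearMap.mkPiAlgebra ℝ (Fin m) ℝ).compLinearMap fun _ => lpbump_eval m k

lemma lpbump_P_apply (k : ℕ) (x : Fin m → Xm) :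
    lpbump_P m k x = ∏ i, x i k := by
  simp [lpbump_P, lpbump_eval]
  rfl

/-- The `m`-linear map `x ↦ ∑' k, ∏ i, x i k`. -/
def lpbump_M (hm : 0 < m) : MultilinearMap ℝ (fun _ : Fin m => Xm) ℝ where
  toFun x := ∑' k, ∏ i, x i k
  map_update_add' x i a b := by
    have h : ∀ k, ∏ j, Function.update x i (a + b) j k =
        (∏ j, Function.update x i a j k) + ∏ j, Function.update x i b j k := by
      intro k
      have h0 := (lpbump_P m k).map_update_add x i a b
      rw [lpbump_P_apply, lpbump_P_apply, lpbump_P_apply] at h0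
      exact h0
    calc ∑' k, ∏ j, Function.update x i (a + b) j k
        = ∑' k, ((∏ j, Function.update x i a j k) + ∏ j, Function.update x i b j k) :=
          tsum_congr h
      _ = (∑' k, ∏ j, Function.update x i a j k) + ∑' k, ∏ j, Function.update x i b j k :=
          Summable.tsum_add (lpbump_summable_prod m hm _) (lpbump_summable_prod m hm _)
  map_update_smul' x i c a := by
    have h : ∀ k, ∏ j, Function.update x i (c • a) j k =
        c * ∏ j, Function.update x i a j k := by
      intro k
      have h0 := (lpbump_P m k).map_update_smul x i c a
      rw [lpbump_P_apply, lpbump_P_apply] at h0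
      simpa using h0
    calc ∑' k, ∏ j, Function.update x i (c • a) j k
        = ∑' k, c * ∏ j, Function.update x i a j k := tsum_congr h
      _ = c * ∑' k, ∏ j, Function.update x i a j k := tsum_mul_left
      _ = c • ∑' k, ∏ j, Function.update x i a j k := by rw [smul_eq_mul]

lemma lpbump_M_apply (hm : 0 < m) (x : Fin m → Xm) :
    lpbump_M m hm x = ∑' k, ∏ i, x i k := by simp [lpbump_M]

lemma lpbump_M_bound_unit (hm : 0 < m) (u : Fin m → Xm) (hu : ∀ i, ‖u i‖ = 1) :
    ‖lpbump_M m hm u‖ ≤ (m : ℝ) := by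
  rw [lpbump_M_apply, Real.norm_eq_abs]
  have hsummand : Summable fun k => |∏ i, u i k| := (lpbump_summable_prod m hm u).abs
  have hs' : Summable fun k => ‖∏ i, u i k‖ := by simpa only [Real.norm_eq_abs] using hsummand
  have habs : |∑' k, ∏ i, u i k| ≤ ∑' k, |∏ i, u i k| := by
    simpa only [Real.norm_eq_abs] using norm_tsum_le_tsum_norm hs'
  refine habs.trans ?_
  have hsum : Summable fun k => ∑ i, |u i k| ^ m :=
    summable_sum fun i _ => lpbump_summable_abs_pow m hm (u i)
  have hle : ∑' k, |∏ i, u i k| ≤ ∑' k, ∑ i, |u i k| ^ m := by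
    refine Summable.tsum_le_tsum ?_ hsummand hsum
    intro k
    rw [Finset.abs_prod]
    exact lpbump_prod_le_sum_pow m hm (fun i => |u i k|) (fun i => abs_nonneg _)
  refine hle.trans ?_
  have hswap : ∑' k, ∑ i, |u i k| ^ m = ∑ i, ∑' k, |u i k| ^ m :=
    Summable.tsum_finsetSum fun i _ => lpbump_summable_abs_pow m hm (u i)
  rw [hswap]
  have : ∀ i ∈ Finset.univ, ∑' k, |u i k| ^ m = 1 := by
    intro i _
    rw [lpbump_tsum_abs_pow m hm (u i), hu i, one_pow]
  rw [Finset.sum_congr rfl this]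
  simp

lemma lpbump_M_bound (hm : 0 < m) (x : Fin m → Xm) :
    ‖lpbump_M m hm x‖ ≤ (m : ℝ) * ∏ i, ‖x i‖ := by
  by_cases hx : ∀ i, x i ≠ 0
  · set u : Fin m → Xm := fun i => ‖x i‖⁻¹ • x i with hu
    have hnorm : ∀ i, ‖u i‖ = 1 := by
      intro i
      rw [hu]
      simp only [norm_smul, norm_inv, norm_norm]
      exact inv_mul_cancel₀ (norm_ne_zero_iff.mpr (hx i))
    have hxu : x = fun i => ‖x i‖ • u i := by
      funext i
      rw [hu]
      simp [smul_smul, mul_inv_cancel₀ (norm_ne_zero_iff.mpr (hx i))]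
    calc ‖lpbump_M m hm x‖ = ‖(∏ i, ‖x i‖) • lpbump_M m hm u‖ := by
          conv_lhs => rw [hxu]
          rw [(lpbump_M m hm).map_smul_univ]
      _ = (∏ i, ‖x i‖) * ‖lpbump_M m hm u‖ := by
          rw [norm_smul, Real.norm_eq_abs, abs_of_nonneg (Finset.prod_nonneg fun i _ => norm_nonneg _)]
      _ ≤ (∏ i, ‖x i‖) * (m : ℝ) := by
          exact mul_le_mul_of_nonneg_left (lpbump_M_bound_unit m hm u hnorm)
            (Finset.prod_nonneg fun i _ => norm_nonneg _)
      _ = (m : ℝ) * ∏ i, ‖x i‖ := mul_comm _ _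
  · push_neg at hx
    obtain ⟨i, hi⟩ := hx
    rw [(lpbump_M m hm).map_coord_zero i hi]
    simp only [norm_zero]
    exact mul_nonneg (by positivity) (Finset.prod_nonneg fun i _ => norm_nonneg _)

/-- The continuous multilinear map. -/
def lpbump_Mc (hm : 0 < m) : ContinuousMultilinearMap ℝ (fun _ : Fin m => Xm) ℝ :=
  (lpbump_M m hm).mkContinuous (m : ℝ) (lpbump_M_bound m hm)

lemma lpbump_F_contDiff (hm : 0 < m) :
    ContDiff ℝ (⊤ : ℕ∞) (fun x : Xm => ∑' k, (x k) ^ m) := by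
  have h1 : ContDiff ℝ (⊤ : ℕ∞) (fun x : Xm => (lpbump_Mc m hm) (fun _ : Fin m => x)) :=
    (lpbump_Mc m hm).contDiff.comp (contDiff_pi.mpr fun _ => contDiff_id)
  have h2 : (fun x : Xm => (lpbump_Mc m hm) (fun _ : Fin m => x)) =
      fun x : Xm => ∑' k, (x k) ^ m := by
    funext x
    show lpbump_M m hm (fun _ => x) = _
    rw [lpbump_M_apply]
    simp
  rwa [h2] at h1

end LpBumpAux


open Metric in
/-- For an even positive integer `p = 2n`, the space `ℓ_p` of `p`-summable real sequences
admits a `C^∞` bump function at `0`; one may take `δ x = τ (‖x‖ ^ p)` for a suitable `C^∞`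
bump function `τ` on the real line. -/
theorem lp_even_has_smooth_bump
    (n : ℕ) (hn : 0 < n) [Fact (1 ≤ ((2 * n : ℕ) : ENNReal))] :
    ∃ τ : ℝ → ℝ, ContDiff ℝ (⊤ : ℕ∞) τ ∧ (∀ᶠ s in nhds (0 : ℝ), τ s = 1) ∧
      (∃ r : ℝ, ∀ s : ℝ, r ≤ |s| → τ s = 0) ∧
      ∃ δ : lp (fun _ : ℕ => ℝ) ((2 * n : ℕ) : ENNReal) → ℝ,
        (∀ x, δ x = τ (‖x‖ ^ (2 * n))) ∧
        ContDiff ℝ (⊤ : ℕ∞) δ ∧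
        (∀ᶠ x in nhds (0 : lp (fun _ : ℕ => ℝ) ((2 * n : ℕ) : ENNReal)), δ x = 1) ∧
        ∃ R : ℝ, ∀ x, R ≤ ‖x‖ → δ x = 0 := by
  have hm : 0 < 2 * n := by omega
  have heven : Even (2 * n) := even_two_mul n
  set f : ContDiffBump (0 : ℝ) := ⟨1, 2, one_pos, one_lt_two⟩ with hf
  -- the key identity
  have hkey : ∀ x : lp (fun _ : ℕ => ℝ) ((2 * n : ℕ) : ENNReal),
      ∑' k, (x k) ^ (2 * n) = ‖x‖ ^ (2 * n) := by
    intro x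
    rw [← lpbump_tsum_abs_pow (2 * n) hm x]
    exact tsum_congr fun k => (heven.pow_abs (x k)).symm
  refine ⟨f, f.contDiff, ?_, ⟨2, fun s hs => f.zero_of_le_dist (by simpa using hs)⟩,
    fun x => f (∑' k, (x k) ^ (2 * n)), fun x => congrArg f (hkey x), ?_, ?_, ⟨2, fun x hx => ?_⟩⟩
  · filter_upwards [Metric.closedBall_mem_nhds (0 : ℝ) one_pos] with s hs
    exact f.one_of_mem_closedBall hs
  · exact f.contDiff.comp (lpbump_F_contDiff (2 * n) hm)
  · filter_upwards [Metric.ball_mem_nhds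
      (0 : lp (fun _ : ℕ => ℝ) ((2 * n : ℕ) : ENNReal)) one_pos] with x hx
    apply f.one_of_mem_closedBall
    rw [hkey x]
    simp only [Metric.mem_closedBall, Real.dist_eq, sub_zero]
    rw [abs_of_nonneg (by positivity)]
    exact pow_le_one₀ (norm_nonneg x) (le_of_lt (by simpa using hx))
  · show f (∑' k, (x k) ^ (2 * n)) = 0
    apply f.zero_of_le_dist
    rw [hkey x]
    simp only [Real.dist_eq, sub_zero]
    rw [abs_of_nonneg (by positivity)]
    calc (2 : ℝ) ≤ 2 ^ (2 * n) := le_self_pow₀ one_le_two hm.ne'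
      _ ≤ ‖x‖ ^ (2 * n) := pow_le_pow_left₀ (by norm_num) hx _
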